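/- (The model profile is a weighted harmonic function.) Fix s ∈ (0,1) and define P : ℝ² → ℝ by P(x_1, x_n) = 2^{−s}( √(x_1² + x_n²) + x_1 )^s. Then: (a) P is smooth on the open upper half plane {x_n > 0}, and for every (x_1, x_n) with x_n > 0, ∂_{x_1}( x_n^{1−2s} ∂_{x_1} P ) + ∂_{x_n}( x_n^{1−2s} ∂_{x_n} P ) = 0; (b) for every x_1 > 0, lim_{x_n → 0+} x_n^{1−2s} ∂_{x_n} P(x_1, x_n) = 0; (c) P is homogeneous of degree s: P(λ x_1, λ x_n) = λ^s P(x_1, x_n) for all λ ≥ 0, and in polar coordinates x_1 = r cos θ, x_n = r sin θ with 0 ≤ θ ≤ π one has P = r^s (cos(θ/2))^{2s}. -/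

import Mathlib

open Set Filter Topology

noncomputable section

/-- The model profile `P(x₁, xₙ) = 2^{-s}(√(x₁² + xₙ²) + x₁)^s` on `ℝ²`. -/
def Pfun (s x₁ xn : ℝ) : ℝ :=
  (2 : ℝ) ^ (-s) * (Real.sqrt (x₁ ^ 2 + xn ^ 2) + x₁) ^ s

lemma sqrt_add_pos {x y : ℝ} (hy : y ≠ 0) : 0 < Real.sqrt (x ^ 2 + y ^ 2) + x := by
  have h0 : (0:ℝ) ≤ x ^ 2 + y ^ 2 := by positivity
  have h1 : Real.sqrt (x ^ 2 + y ^ 2) ^ 2 = x ^ 2 + y ^ 2 := Real.sq_sqrt h0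
  have h2 : 0 ≤ Real.sqrt (x ^ 2 + y ^ 2) := Real.sqrt_nonneg _
  have hy2 : 0 < y ^ 2 := by positivity
  nlinarith [sq_nonneg (Real.sqrt (x ^ 2 + y ^ 2) + x)]

/-- derivative of the base `√(a²+y²)+a` in the first variable -/
lemma hasDerivAt_base_fst (y x : ℝ) (hR : 0 < Real.sqrt (x ^ 2 + y ^ 2)) :
    HasDerivAt (fun a : ℝ => Real.sqrt (a ^ 2 + y ^ 2) + a)
      (x / Real.sqrt (x ^ 2 + y ^ 2) + 1) x := by
  have h1 : HasDerivAt (fun a : ℝ => a ^ 2 + y ^ 2) (2 * x) x := by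
    simpa using (hasDerivAt_pow 2 x).add_const (y ^ 2)
  have h2 : HasDerivAt (fun a : ℝ => Real.sqrt (a ^ 2 + y ^ 2))
      (1 / (2 * Real.sqrt (x ^ 2 + y ^ 2)) * (2 * x)) x := by
    have := HasDerivAt.comp x (Real.hasDerivAt_sqrt (Real.sqrt_pos.mp hR).ne') h1
    exact this
  have := h2.add (hasDerivAt_id x)
  refine this.congr_deriv ?_
  congr 1; rw [one_div, ← div_eq_inv_mul, mul_div_mul_left _ _ two_ne_zero]

/-- derivative of `√(x²+b²)` in the second variable -/
lemma hasDerivAt_sqrt_snd (x y : ℝ) (hR : 0 < Real.sqrt (x ^ 2 + y ^ 2)) :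
    HasDerivAt (fun b : ℝ => Real.sqrt (x ^ 2 + b ^ 2))
      (y / Real.sqrt (x ^ 2 + y ^ 2)) y := by
  have h1 : HasDerivAt (fun b : ℝ => x ^ 2 + b ^ 2) (2 * y) y := by
    simpa using ((hasDerivAt_pow 2 y).const_add (x ^ 2))
  have h2 : HasDerivAt (fun b : ℝ => Real.sqrt (x ^ 2 + b ^ 2))
      (1 / (2 * Real.sqrt (x ^ 2 + y ^ 2)) * (2 * y)) y := by
    have := HasDerivAt.comp y (Real.hasDerivAt_sqrt (Real.sqrt_pos.mp hR).ne') h1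
    exact this
  convert h2 using 1
  field_simp

/-- `∂₁ P = 2^{-s} s B^s / R` -/
lemma hasDerivAt_P_fst (s : ℝ) {y : ℝ} (hy : y ≠ 0) (x : ℝ) :
    HasDerivAt (fun a : ℝ => Pfun s a y)
      ((2:ℝ) ^ (-s) * s * ((Real.sqrt (x ^ 2 + y ^ 2) + x) ^ s / Real.sqrt (x ^ 2 + y ^ 2))) x := by
  have hR : 0 < Real.sqrt (x ^ 2 + y ^ 2) := Real.sqrt_pos.2 (by positivity)
  have hB : 0 < Real.sqrt (x ^ 2 + y ^ 2) + x := sqrt_add_pos hy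
  have h4 : HasDerivAt (fun a : ℝ => (Real.sqrt (a ^ 2 + y ^ 2) + a) ^ s)
      ((x / Real.sqrt (x ^ 2 + y ^ 2) + 1) * s * (Real.sqrt (x ^ 2 + y ^ 2) + x) ^ (s - 1)) x :=
    (hasDerivAt_base_fst y x hR).rpow_const (Or.inl hB.ne')
  have h5 := h4.const_mul ((2:ℝ) ^ (-s))
  have key : (2:ℝ) ^ (-s) * s * ((Real.sqrt (x ^ 2 + y ^ 2) + x) ^ s / Real.sqrt (x ^ 2 + y ^ 2))
      = (2:ℝ) ^ (-s) * ((x / Real.sqrt (x ^ 2 + y ^ 2) + 1) * s * (Real.sqrt (x ^ 2 + y ^ 2) + x) ^ (s - 1)) := by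
    have hBs : (Real.sqrt (x ^ 2 + y ^ 2) + x) ^ s
        = (Real.sqrt (x ^ 2 + y ^ 2) + x) ^ (s - 1) * (Real.sqrt (x ^ 2 + y ^ 2) + x) := by
      rw [← Real.rpow_add_one hB.ne']; ring_nf
    rw [hBs]; field_simp; ring
  rw [key]
  exact h5

/-- `∂₂ P = 2^{-s} s B^{s-1} (y/R)` -/
lemma hasDerivAt_P_snd (s x y : ℝ) (hR : 0 < Real.sqrt (x ^ 2 + y ^ 2))
    (hB : 0 < Real.sqrt (x ^ 2 + y ^ 2) + x) :
    HasDerivAt (fun b : ℝ => Pfun s x b)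
      ((2:ℝ) ^ (-s) * s * ((Real.sqrt (x ^ 2 + y ^ 2) + x) ^ (s - 1)
        * (y / Real.sqrt (x ^ 2 + y ^ 2)))) y := by
  have h3 : HasDerivAt (fun b : ℝ => Real.sqrt (x ^ 2 + b ^ 2) + x)
      (y / Real.sqrt (x ^ 2 + y ^ 2)) y := (hasDerivAt_sqrt_snd x y hR).add_const x
  have h4 : HasDerivAt (fun b : ℝ => (Real.sqrt (x ^ 2 + b ^ 2) + x) ^ s)
      (y / Real.sqrt (x ^ 2 + y ^ 2) * s * (Real.sqrt (x ^ 2 + y ^ 2) + x) ^ (s - 1)) y :=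
    h3.rpow_const (Or.inl hB.ne')
  have h5 := h4.const_mul ((2:ℝ) ^ (-s))
  refine h5.congr_deriv ?_
  ring

lemma key_algebra (s c x₁ xn R p w : ℝ) (hR : 0 < R) (hB : 0 < R + x₁) (hxn : 0 < xn) (hp : 0 < p)
    (hw : 0 < w) (hc : 0 < c)
    (hRsq : R ^ 2 = x₁ ^ 2 + xn ^ 2) :
    w * (c * s) *
      (((x₁ / R + 1) * s * ((p / (R + x₁))) * R - p * (x₁ / R)) / R ^ 2)
    + ((1 - 2 * s) * (w / xn) * (c * s * ((p / (R + x₁)) * (xn / R)))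
      + w * (c * s * ((xn / R) * (s - 1) * (p / (R + x₁) / (R + x₁)) * (xn / R)
          + (p / (R + x₁)) * ((1 * R - xn * (xn / R)) / R ^ 2)))) = 0 := by
  have h1 : R ≠ 0 := hR.ne'
  have h2 : R + x₁ ≠ 0 := hB.ne'
  field_simp
  linear_combination (-(w * c * s * p * (R * (s - 1) - R - x₁))) * hRsq


lemma homog_polar (s : ℝ) (hs : s ∈ Ioo (0:ℝ) 1) :
    (∀ lam x₁ xn : ℝ, 0 ≤ lam →
      Pfun s (lam * x₁) (lam * xn) = lam ^ s * Pfun s x₁ xn) ∧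
    (∀ r θ : ℝ, 0 ≤ r → θ ∈ Icc (0 : ℝ) Real.pi →
      Pfun s (r * Real.cos θ) (r * Real.sin θ)
        = r ^ s * (Real.cos (θ / 2)) ^ (2 * s)) := by
  have hBnn : ∀ x y : ℝ, 0 ≤ Real.sqrt (x ^ 2 + y ^ 2) + x := by
    intro x y
    have h1 : |x| ≤ Real.sqrt (x ^ 2 + y ^ 2) := by
      rw [← Real.sqrt_sq_eq_abs]
      exact Real.sqrt_le_sqrt (by nlinarith [sq_nonneg y])
    have := neg_abs_le x
    linarith
  constructor
  · intro lam x₁ xn hlam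
    have hsq : Real.sqrt ((lam * x₁) ^ 2 + (lam * xn) ^ 2)
        = lam * Real.sqrt (x₁ ^ 2 + xn ^ 2) := by
      rw [show (lam * x₁) ^ 2 + (lam * xn) ^ 2 = lam ^ 2 * (x₁ ^ 2 + xn ^ 2) by ring,
        Real.sqrt_mul (sq_nonneg lam), Real.sqrt_sq hlam]
    rw [Pfun, Pfun, hsq, show lam * Real.sqrt (x₁ ^ 2 + xn ^ 2) + lam * x₁
        = lam * (Real.sqrt (x₁ ^ 2 + xn ^ 2) + x₁) by ring,
      Real.mul_rpow hlam (hBnn x₁ xn)]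
    ring
  · intro r θ hr hθ
    have hsq : Real.sqrt ((r * Real.cos θ) ^ 2 + (r * Real.sin θ) ^ 2) = r := by
      rw [show (r * Real.cos θ) ^ 2 + (r * Real.sin θ) ^ 2
          = r ^ 2 * ((Real.sin θ) ^ 2 + (Real.cos θ) ^ 2) by ring,
        Real.sin_sq_add_cos_sq, mul_one, Real.sqrt_sq hr]
    have hcos : Real.cos θ = 2 * Real.cos (θ / 2) ^ 2 - 1 := by
      have h := Real.cos_sq (θ / 2)
      rw [show 2 * (θ / 2) = θ by ring] at h
      linarith
    have hc2 : (0:ℝ) ≤ Real.cos (θ / 2) := by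
      apply Real.cos_nonneg_of_mem_Icc
      constructor
      · linarith [hθ.1, Real.pi_pos]
      · linarith [hθ.2]
    rw [Pfun, hsq, hcos]
    have hbase : r + r * (2 * Real.cos (θ / 2) ^ 2 - 1)
        = 2 * (r * Real.cos (θ / 2) ^ 2) := by ring
    rw [hbase, Real.mul_rpow (by norm_num) (by positivity),
      Real.mul_rpow hr (by positivity)]
    have h2s : (2:ℝ) ^ (-s) * (2:ℝ) ^ s = 1 := by
      rw [← Real.rpow_add (by norm_num)]; simp
    have hcs : (Real.cos (θ / 2) ^ 2) ^ s = Real.cos (θ / 2) ^ (2 * s) := by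
      rw [← Real.rpow_natCast (Real.cos (θ / 2)) 2, ← Real.rpow_mul hc2]
      norm_num
    rw [hcs, ← mul_assoc, h2s, one_mul]

lemma part_b (s : ℝ) (hs : s ∈ Ioo (0:ℝ) 1) (x₁ : ℝ) (hx₁ : 0 < x₁) :
      Tendsto (fun xn : ℝ => xn ^ (1 - 2 * s) * deriv (fun b : ℝ => Pfun s x₁ b) xn)
        (𝓝[>] (0 : ℝ)) (𝓝 0) := by
  have hRpos : ∀ y : ℝ, 0 < Real.sqrt (x₁ ^ 2 + y ^ 2) := fun y =>
    Real.sqrt_pos.2 (by positivity)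
  have hBpos : ∀ y : ℝ, 0 < Real.sqrt (x₁ ^ 2 + y ^ 2) + x₁ := by
    intro y
    have : (0:ℝ) ≤ Real.sqrt (x₁ ^ 2 + y ^ 2) := Real.sqrt_nonneg _
    linarith
  -- the explicit comparison function
  set F : ℝ → ℝ := fun y => y ^ (2 - 2 * s) *
    ((2:ℝ) ^ (-s) * s * ((Real.sqrt (x₁ ^ 2 + y ^ 2) + x₁) ^ (s - 1) / Real.sqrt (x₁ ^ 2 + y ^ 2)))
    with hF
  have hEq : ∀ y ∈ Ioi (0:ℝ),
      y ^ (1 - 2 * s) * deriv (fun b : ℝ => Pfun s x₁ b) y = F y := by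
    intro y hy
    rw [(hasDerivAt_P_snd s x₁ y (hRpos y) (hBpos y)).deriv, hF]
    have h2 : y ^ (2 - 2 * s) = y ^ (1 - 2 * s) * y := by
      rw [show (2 - 2 * s) = (1 - 2 * s) + 1 by ring, Real.rpow_add_one (ne_of_gt hy)]
    simp only [h2]; ring
  have h1 : Tendsto (fun y : ℝ => y ^ (2 - 2 * s)) (𝓝[>] (0:ℝ)) (𝓝 0) := by
    have hc : ContinuousAt (fun y : ℝ => y ^ (2 - 2 * s)) 0 :=
      Real.continuousAt_rpow_const 0 (2 - 2 * s) (Or.inr (by linarith [hs.2]))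
    have : Tendsto (fun y : ℝ => y ^ (2 - 2 * s)) (𝓝[>] (0:ℝ)) (𝓝 ((0:ℝ) ^ (2 - 2 * s))) :=
      hc.tendsto.mono_left nhdsWithin_le_nhds
    rwa [Real.zero_rpow (by intro h; nlinarith [hs.2] : (2 - 2 * s) ≠ 0)] at this
  have h2 : Tendsto (fun y : ℝ => (2:ℝ) ^ (-s) * s *
      ((Real.sqrt (x₁ ^ 2 + y ^ 2) + x₁) ^ (s - 1) / Real.sqrt (x₁ ^ 2 + y ^ 2))) (𝓝[>] (0:ℝ))
      (𝓝 ((2:ℝ) ^ (-s) * s *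
      ((Real.sqrt (x₁ ^ 2 + 0 ^ 2) + x₁) ^ (s - 1) / Real.sqrt (x₁ ^ 2 + 0 ^ 2)))) := by
    apply Tendsto.mono_left _ nhdsWithin_le_nhds
    apply ContinuousAt.tendsto
    apply ContinuousAt.mul continuousAt_const
    apply ContinuousAt.div
    · apply ContinuousAt.rpow_const
      · exact ((Real.continuous_sqrt.comp (by fun_prop)).add continuous_const).continuousAt
      · exact Or.inl (hBpos 0).ne'
    · exact (Real.continuous_sqrt.comp (by fun_prop)).continuousAt
    · exact (hRpos 0).ne'
  have hT : Tendsto F (𝓝[>] (0:ℝ)) (𝓝 0) := by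
    have := h1.mul h2
    simpa using this
  exact hT.congr' (eventuallyEq_of_mem self_mem_nhdsWithin fun y hy => (hEq y hy).symm)

lemma part_smooth (s : ℝ) (hs : s ∈ Ioo (0:ℝ) 1) :
    ContDiffOn ℝ (⊤ : ℕ∞) (fun p : ℝ × ℝ => Pfun s p.1 p.2) {p : ℝ × ℝ | 0 < p.2} := by
  intro p hp
  have hp2 : (0:ℝ) < p.2 := hp
  have hB : 0 < Real.sqrt (p.1 ^ 2 + p.2 ^ 2) + p.1 := sqrt_add_pos hp2.ne'
  apply ContDiffAt.contDiffWithinAt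
  have h1 : ContDiffAt ℝ (⊤ : ℕ∞) (fun q : ℝ × ℝ => q.1 ^ 2 + q.2 ^ 2) p := by fun_prop
  have h2 : ContDiffAt ℝ (⊤ : ℕ∞) (fun q : ℝ × ℝ => Real.sqrt (q.1 ^ 2 + q.2 ^ 2)) p :=
    (Real.contDiffAt_sqrt (by positivity : p.1 ^ 2 + p.2 ^ 2 ≠ 0)).comp p h1
  have h3 : ContDiffAt ℝ (⊤ : ℕ∞) (fun q : ℝ × ℝ => Real.sqrt (q.1 ^ 2 + q.2 ^ 2) + q.1) p :=
    h2.add (contDiff_fst.contDiffAt)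
  have h4 : ContDiffAt ℝ (⊤ : ℕ∞)
      (fun q : ℝ × ℝ => (Real.sqrt (q.1 ^ 2 + q.2 ^ 2) + q.1) ^ s) p :=
    h3.rpow_const_of_ne hB.ne'
  exact contDiffAt_const.mul h4

lemma weighted_eq (s : ℝ) (hs : s ∈ Ioo (0:ℝ) 1) (x₁ xn : ℝ) (hxn : 0 < xn) :
      deriv (fun t : ℝ => xn ^ (1 - 2 * s) * deriv (fun a : ℝ => Pfun s a xn) t) x₁
        + deriv (fun t : ℝ => t ^ (1 - 2 * s) * deriv (fun b : ℝ => Pfun s x₁ b) t) xn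
        = 0 := by
  have hR0 : 0 < Real.sqrt (x₁ ^ 2 + xn ^ 2) := Real.sqrt_pos.2 (by positivity)
  have hB0 : 0 < Real.sqrt (x₁ ^ 2 + xn ^ 2) + x₁ := sqrt_add_pos hxn.ne'
  set c : ℝ := (2:ℝ) ^ (-s) with hc
  have hcpos : 0 < c := Real.rpow_pos_of_pos (by norm_num) _
  -- FIRST TERM
  have hfun1 : (fun t : ℝ => xn ^ (1 - 2 * s) * deriv (fun a : ℝ => Pfun s a xn) t)
      = fun t : ℝ => (xn ^ (1 - 2 * s) * (c * s)) *
        ((Real.sqrt (t ^ 2 + xn ^ 2) + t) ^ s / Real.sqrt (t ^ 2 + xn ^ 2)) := by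
    funext t
    rw [(hasDerivAt_P_fst s hxn.ne' t).deriv]
    ring
  have hu : HasDerivAt (fun t : ℝ => (Real.sqrt (t ^ 2 + xn ^ 2) + t) ^ s)
      ((x₁ / Real.sqrt (x₁ ^ 2 + xn ^ 2) + 1) * s * (Real.sqrt (x₁ ^ 2 + xn ^ 2) + x₁) ^ (s - 1)) x₁ :=
    (hasDerivAt_base_fst xn x₁ hR0).rpow_const (Or.inl hB0.ne')
  have hv : HasDerivAt (fun t : ℝ => Real.sqrt (t ^ 2 + xn ^ 2))
      (x₁ / Real.sqrt (x₁ ^ 2 + xn ^ 2)) x₁ := by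
    have h1 : HasDerivAt (fun t : ℝ => t ^ 2 + xn ^ 2) (2 * x₁) x₁ := by
      simpa using (hasDerivAt_pow 2 x₁).add_const (xn ^ 2)
    have h2 := HasDerivAt.comp x₁ (Real.hasDerivAt_sqrt (Real.sqrt_pos.mp hR0).ne') h1
    have h2' : HasDerivAt (fun t : ℝ => Real.sqrt (t ^ 2 + xn ^ 2))
        (1 / (2 * Real.sqrt (x₁ ^ 2 + xn ^ 2)) * (2 * x₁)) x₁ := by
      exact h2
    convert h2' using 1
    field_simp
  have hdiv := (hu.div hv hR0.ne').const_mul (xn ^ (1 - 2 * s) * (c * s))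
  -- SECOND TERM
  have hq : HasDerivAt (fun t : ℝ => (Real.sqrt (x₁ ^ 2 + t ^ 2) + x₁) ^ (s - 1))
      ((xn / Real.sqrt (x₁ ^ 2 + xn ^ 2)) * (s - 1) * (Real.sqrt (x₁ ^ 2 + xn ^ 2) + x₁) ^ (s - 1 - 1)) xn :=
    ((hasDerivAt_sqrt_snd x₁ xn hR0).add_const x₁).rpow_const (Or.inl hB0.ne')
  have hlin : HasDerivAt (fun t : ℝ => t / Real.sqrt (x₁ ^ 2 + t ^ 2))
      ((1 * Real.sqrt (x₁ ^ 2 + xn ^ 2) - xn * (xn / Real.sqrt (x₁ ^ 2 + xn ^ 2)))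
        / Real.sqrt (x₁ ^ 2 + xn ^ 2) ^ 2) xn :=
    (hasDerivAt_id xn).div (hasDerivAt_sqrt_snd x₁ xn hR0) hR0.ne'
  have ha : HasDerivAt (fun t : ℝ => t ^ (1 - 2 * s)) ((1 - 2 * s) * xn ^ (1 - 2 * s - 1)) xn :=
    Real.hasDerivAt_rpow_const (Or.inl hxn.ne')
  have hg := (ha.mul ((hq.mul hlin).const_mul (c * s)))
  have hfun2 : (fun t : ℝ => t ^ (1 - 2 * s) * deriv (fun b : ℝ => Pfun s x₁ b) t)
      =ᶠ[𝓝 xn] fun t : ℝ => t ^ (1 - 2 * s) *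
        ((c * s) * ((Real.sqrt (x₁ ^ 2 + t ^ 2) + x₁) ^ (s - 1) * (t / Real.sqrt (x₁ ^ 2 + t ^ 2)))) := by
    filter_upwards [Ioi_mem_nhds hxn] with t ht
    have ht0 : (0:ℝ) < t := ht
    have hRt : 0 < Real.sqrt (x₁ ^ 2 + t ^ 2) := Real.sqrt_pos.2 (by nlinarith [sq_nonneg x₁])
    have hBt : 0 < Real.sqrt (x₁ ^ 2 + t ^ 2) + x₁ := sqrt_add_pos ht0.ne'
    rw [(hasDerivAt_P_snd s x₁ t hRt hBt).deriv]
  simp only [Pi.div_apply] at hdiv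
  simp only [Pi.mul_apply] at hg
  rw [hfun1, hdiv.deriv, hfun2.deriv_eq, (show HasDerivAt (fun t : ℝ => t ^ (1 - 2 * s) *
    ((c * s) * ((Real.sqrt (x₁ ^ 2 + t ^ 2) + x₁) ^ (s - 1) * (t / Real.sqrt (x₁ ^ 2 + t ^ 2))))) _ xn from hg).deriv]
  -- ALGEBRA
  set R : ℝ := Real.sqrt (x₁ ^ 2 + xn ^ 2) with hRdef
  have hRsq : R ^ 2 = x₁ ^ 2 + xn ^ 2 := Real.sq_sqrt (by positivity)
  have hb1 : (R + x₁) ^ (s - 1) = (R + x₁) ^ s / (R + x₁) := by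
    rw [Real.rpow_sub hB0, Real.rpow_one]
  have hb2 : (R + x₁) ^ (s - 1 - 1) = (R + x₁) ^ s / (R + x₁) / (R + x₁) := by
    rw [Real.rpow_sub hB0, Real.rpow_sub hB0, Real.rpow_one]
  have hw1 : xn ^ (1 - 2 * s - 1) = xn ^ (1 - 2 * s) / xn := by
    rw [Real.rpow_sub hxn, Real.rpow_one]
  rw [hb1, hb2, hw1]
  have hppos : 0 < (R + x₁) ^ s := Real.rpow_pos_of_pos hB0 s
  have hwpos : 0 < xn ^ (1 - 2 * s) := Real.rpow_pos_of_pos hxn _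
  linear_combination key_algebra s c x₁ xn R ((R + x₁) ^ s) (xn ^ (1 - 2 * s))
    hR0 hB0 hxn hppos hwpos hcpos hRsq

/-- **The model profile is a weighted harmonic function**: for `s ∈ (0,1)`,
(a) `P` is smooth on `{xₙ > 0}` and satisfies
`∂_{x₁}(xₙ^{1-2s} ∂_{x₁}P) + ∂_{xₙ}(xₙ^{1-2s} ∂_{xₙ}P) = 0` there;
(b) `xₙ^{1-2s} ∂_{xₙ}P(x₁, xₙ) → 0` as `xₙ → 0+`, for every `x₁ > 0`;
(c) `P` is homogeneous of degree `s`, and equals `r^s cos(θ/2)^{2s}` in polar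
coordinates `x₁ = r cos θ`, `xₙ = r sin θ`, `0 ≤ θ ≤ π`. -/
theorem model_profile_weighted_harmonic (s : ℝ) (hs : s ∈ Ioo (0 : ℝ) 1) :
    -- (a) smoothness on the open upper half-plane
    (ContDiffOn ℝ (⊤ : ℕ∞) (fun p : ℝ × ℝ => Pfun s p.1 p.2) {p : ℝ × ℝ | 0 < p.2}) ∧
    -- (a) the weighted equation `div(xₙ^{1-2s} ∇P) = 0` for `xₙ > 0`
    (∀ x₁ xn : ℝ, 0 < xn →
      deriv (fun t : ℝ => xn ^ (1 - 2 * s) * deriv (fun a : ℝ => Pfun s a xn) t) x₁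
        + deriv (fun t : ℝ => t ^ (1 - 2 * s) * deriv (fun b : ℝ => Pfun s x₁ b) t) xn
        = 0) ∧
    -- (b) vanishing weighted conormal derivative on `{x₁ > 0}`
    (∀ x₁ : ℝ, 0 < x₁ →
      Tendsto (fun xn : ℝ => xn ^ (1 - 2 * s) * deriv (fun b : ℝ => Pfun s x₁ b) xn)
        (𝓝[>] (0 : ℝ)) (𝓝 0)) ∧
    -- (c) homogeneity of degree `s`
    (∀ lam x₁ xn : ℝ, 0 ≤ lam →
      Pfun s (lam * x₁) (lam * xn) = lam ^ s * Pfun s x₁ xn) ∧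
    -- (c) polar form
    (∀ r θ : ℝ, 0 ≤ r → θ ∈ Icc (0 : ℝ) Real.pi →
      Pfun s (r * Real.cos θ) (r * Real.sin θ)
        = r ^ s * (Real.cos (θ / 2)) ^ (2 * s)) := by
  obtain ⟨hhom, hpol⟩ := homog_polar s hs
  exact ⟨part_smooth s hs, fun x₁ xn hxn => weighted_eq s hs x₁ xn hxn,
    fun x₁ hx₁ => part_b s hs x₁ hx₁, hhom, hpol⟩
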